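/- Let n ≥ 1, s ≥ 1, let H : ℝ^n → ℝ be continuously differentiable, let J ∈ ℝ^{n×n} be a skew-symmetric matrix, and let {P_j}_{j=0}^{s−1} be the shifted Legendre polynomials on [0,1] (deg P_j = j, ∫₀¹ P_i P_j = δ_{ij}). Let h > 0 and let σ : [0,h] → ℝ^n be a polynomial of degree at most s satisfying σ'(ch) = Σ_{j=0}^{s−1} γ_j P_j(c) for all c ∈ [0,1], where γ_j = ∫₀¹ J ∇H(σ(τh)) P_j(τ) dτ. Then H(σ(h)) = H(σ(0)). -/

import Mathlib

/-- For a skew-symmetric matrix `J`, the quadratic form `x ⬝ J x` vanishes. -/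
lemma skew_quad {n : ℕ} (J : Matrix (Fin n) (Fin n) ℝ) (hJ : J.transpose = -J)
    (x : Fin n → ℝ) : ∑ i, J.mulVec x i * x i = 0 := by
  have key : ∀ i k, J k i = - J i k := by
    intro i k
    have := congrFun (congrFun hJ i) k
    simpa [Matrix.transpose_apply] using this
  have hS : (∑ i, J.mulVec x i * x i)
      = ∑ i, ∑ k, J i k * x k * x i := by
    simp [Matrix.mulVec, dotProduct, Finset.sum_mul]
  have hS2 : (∑ i : Fin n, ∑ k : Fin n, J i k * x k * x i)
      = - ∑ i : Fin n, ∑ k : Fin n, J i k * x k * x i := by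
    calc (∑ i : Fin n, ∑ k : Fin n, J i k * x k * x i)
        = ∑ i : Fin n, ∑ k : Fin n, (-(J k i)) * x k * x i := by
          refine Finset.sum_congr rfl fun i _ => Finset.sum_congr rfl fun k _ => ?_
          rw [← key k i]
      _ = - ∑ i : Fin n, ∑ k : Fin n, J k i * x k * x i := by
          simp [Finset.sum_neg_distrib]
      _ = - ∑ k : Fin n, ∑ i : Fin n, J k i * x k * x i := by
          rw [Finset.sum_comm]
      _ = - ∑ i : Fin n, ∑ k : Fin n, J i k * x k * x i := by
          congr 1
          refine Finset.sum_congr rfl fun i _ => Finset.sum_congr rfl fun k _ => ?_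
          ring
  rw [hS]
  linarith [hS2]

/-- energy conservation for the continuous-stage HBVM polynomial: if `σ` is a
polynomial of degree ≤ s with `σ'(ch) = Σ_{j<s} γ_j P_j(c)`, where
`γ_j = ∫₀¹ J ∇H(σ(τh)) P_j(τ) dτ` and `J` is skew-symmetric, then `H(σ(h)) = H(σ(0))`. -/
theorem stmt_5 (n s : ℕ) (hn : 1 ≤ n) (hs : 1 ≤ s)
    (H : (Fin n → ℝ) → ℝ) (hH : ContDiff ℝ 1 H)
    (gradH : (Fin n → ℝ) → Fin n → ℝ)
    (hgrad : ∀ y w, fderiv ℝ H y w = ∑ i, gradH y i * w i)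
    (J : Matrix (Fin n) (Fin n) ℝ) (hJ : J.transpose = -J)
    (P : ℕ → Polynomial ℝ)
    (hdeg : ∀ j, (P j).degree = j)
    (horth : ∀ i j, (∫ x in (0:ℝ)..1, (P i).eval x * (P j).eval x)
      = if i = j then 1 else 0)
    (h : ℝ) (hh : 0 < h)
    (σ : ℝ → Fin n → ℝ)
    (hσpoly : ∀ i, ∃ Q : Polynomial ℝ, Q.natDegree ≤ s ∧ ∀ t, σ t i = Q.eval t)
    (γ : ℕ → Fin n → ℝ)
    (hγ : ∀ j, γ j = ∫ τ in (0:ℝ)..1, (P j).eval τ • J.mulVec (gradH (σ (τ * h))))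
    (hσ' : ∀ c ∈ Set.Icc (0:ℝ) 1,
      HasDerivAt σ (∑ j ∈ Finset.range s, (P j).eval c • γ j) (c * h)) :
    H (σ h) = H (σ 0) := by
  -- continuity of σ
  have hσc : Continuous σ := by
    refine continuous_pi fun i => ?_
    obtain ⟨Q, _, hQ⟩ := hσpoly i
    have : (fun t => σ t i) = fun t => Q.eval t := funext hQ
    rw [this]
    exact Q.continuous
  -- gradH in terms of fderiv
  have hgradEq : ∀ y i, gradH y i = fderiv ℝ H y (Pi.single i 1) := by
    intro y i
    rw [hgrad]
    simp [Pi.single_apply, Finset.sum_ite_eq']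
  -- continuity of gradH components
  have hgc : ∀ i, Continuous fun y => gradH y i := by
    intro i
    have h1 : Continuous fun y => fderiv ℝ H y (Pi.single i 1) :=
      (hH.continuous_fderiv one_ne_zero).clm_apply continuous_const
    simpa [← hgradEq] using h1
  have hσhc : Continuous fun c : ℝ => σ (c * h) :=
    hσc.comp (continuous_id.mul continuous_const)
  have hgσc : ∀ i, Continuous fun c : ℝ => gradH (σ (c * h)) i :=
    fun i => (hgc i).comp hσhc
  -- the Fourier-Legendre coefficients of gradH ∘ σ
  set g : ℕ → Fin n → ℝ :=
    fun j i => ∫ τ in (0:ℝ)..1, (P j).eval τ * gradH (σ (τ * h)) i with hg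
  -- γ j = J.mulVec (g j)
  have hγ' : ∀ j, γ j = J.mulVec (g j) := by
    intro j
    funext i
    have hcont : Continuous fun τ : ℝ =>
        (P j).eval τ • J.mulVec (gradH (σ (τ * h))) := by
      refine ((P j).continuous).smul ?_
      refine continuous_pi fun k => ?_
      simp only [Matrix.mulVec, dotProduct]
      exact continuous_finset_sum _ fun l _ => continuous_const.mul (hgσc l)
    have hint : IntervalIntegrable
        (fun τ : ℝ => (P j).eval τ • J.mulVec (gradH (σ (τ * h)))) MeasureTheory.volume 0 1 :=
      hcont.intervalIntegrable _ _
    have := (ContinuousLinearMap.proj (R := ℝ) (φ := fun _ : Fin n => ℝ) i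
      ).intervalIntegral_comp_comm hint
    have hγi : γ j i = ∫ τ in (0:ℝ)..1,
        ((P j).eval τ • J.mulVec (gradH (σ (τ * h)))) i := by
      rw [hγ j]
      exact (this).symm
    rw [hγi]
    have hexp : ∀ τ : ℝ, ((P j).eval τ • J.mulVec (gradH (σ (τ * h)))) i
        = ∑ k, J i k * ((P j).eval τ * gradH (σ (τ * h)) k) := by
      intro τ
      simp [Matrix.mulVec, dotProduct, Finset.mul_sum]
      exact Finset.sum_congr rfl fun k _ => by ring
    simp only [hexp]
    rw [intervalIntegral.integral_finset_sum]
    · have : ∀ k ∈ Finset.univ, (∫ τ in (0:ℝ)..1,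
          J i k * ((P j).eval τ * gradH (σ (τ * h)) k)) = J i k * g j k := by
        intro k _
        rw [intervalIntegral.integral_const_mul]
      rw [Finset.sum_congr rfl this]
      simp [Matrix.mulVec, dotProduct]
    · intro k _
      exact (continuous_const.mul ((P j).continuous.mul (hgσc k))).intervalIntegrable _ _
  -- the derivative of c ↦ H (σ (c h))
  set F' : ℝ → ℝ := fun c => ∑ j ∈ Finset.range s,
    (P j).eval c * (h * ∑ i, gradH (σ (c * h)) i * γ j i) with hF'
  have hFderiv : ∀ c ∈ Set.uIcc (0:ℝ) 1, HasDerivAt (fun c => H (σ (c * h))) (F' c) c := by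
    intro c hc
    rw [Set.uIcc_of_le zero_le_one] at hc
    have hmul : HasDerivAt (fun c : ℝ => c * h) h c := by
      simpa using (hasDerivAt_id c).mul_const h
    have h2 : HasDerivAt (fun c : ℝ => σ (c * h))
        (h • ∑ j ∈ Finset.range s, (P j).eval c • γ j) c :=
      (hσ' c hc).scomp c hmul
    have h3 : HasDerivAt (fun c : ℝ => H (σ (c * h)))
        (fderiv ℝ H (σ (c * h)) (h • ∑ j ∈ Finset.range s, (P j).eval c • γ j)) c :=
      ((hH.differentiable one_ne_zero) (σ (c * h))).hasFDerivAt.comp_hasDerivAt c h2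
    convert h3 using 1
    rw [hgrad]
    simp only [hF', Pi.smul_apply, Finset.sum_apply, smul_eq_mul, Finset.mul_sum,
      Finset.sum_mul]
    rw [Finset.sum_comm]
    refine Finset.sum_congr rfl fun j _ => Finset.sum_congr rfl fun i _ => ?_
    ring
  have hF'cont : Continuous F' := by
    refine continuous_finset_sum _ fun j _ => ?_
    refine ((P j).continuous).mul (continuous_const.mul ?_)
    exact continuous_finset_sum _ fun i _ => (hgσc i).mul continuous_const
  have hFTC : (∫ c in (0:ℝ)..1, F' c) = H (σ (1 * h)) - H (σ (0 * h)) :=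
    intervalIntegral.integral_eq_sub_of_hasDerivAt hFderiv
      (hF'cont.intervalIntegrable _ _)
  -- compute the integral and show it vanishes
  have hint0 : (∫ c in (0:ℝ)..1, F' c) = 0 := by
    rw [hF']
    rw [intervalIntegral.integral_finset_sum]
    · have hterm : ∀ j ∈ Finset.range s, (∫ c in (0:ℝ)..1,
          (P j).eval c * (h * ∑ i, gradH (σ (c * h)) i * γ j i)) = 0 := by
        intro j _
        have hswap : ∀ c : ℝ, (P j).eval c * (h * ∑ i, gradH (σ (c * h)) i * γ j i)
            = h * ∑ i, γ j i * ((P j).eval c * gradH (σ (c * h)) i) := by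
          intro c
          rw [Finset.mul_sum, Finset.mul_sum, Finset.mul_sum]
          refine Finset.sum_congr rfl fun i _ => ?_
          ring
        simp only [hswap]
        rw [intervalIntegral.integral_const_mul, intervalIntegral.integral_finset_sum]
        · have : ∀ i ∈ Finset.univ, (∫ c in (0:ℝ)..1,
              γ j i * ((P j).eval c * gradH (σ (c * h)) i)) = γ j i * g j i := by
            intro i _
            rw [intervalIntegral.integral_const_mul]
          rw [Finset.sum_congr rfl this]
          have : (∑ i, γ j i * g j i) = ∑ i, J.mulVec (g j) i * g j i := by
            refine Finset.sum_congr rfl fun i _ => ?_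
            rw [hγ' j]
          rw [this, skew_quad J hJ (g j), mul_zero]
        · intro i _
          exact (continuous_const.mul ((P j).continuous.mul (hgσc i))).intervalIntegrable _ _
      exact Finset.sum_eq_zero hterm
    · intro j _
      refine (((P j).continuous).mul (continuous_const.mul ?_)).intervalIntegrable _ _
      exact continuous_finset_sum _ fun i _ => (hgσc i).mul continuous_const
  rw [hint0] at hFTC
  simp only [one_mul, zero_mul] at hFTC
  linarith
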